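/- Let r > 0 and n ≥ 1. Let Z be a compact (r,n)-stacked space over X_1,…,X_n with pieces Z_1,…,Z_n, and W a compact (r,n)-stacked space over Y_1,…,Y_n with pieces W_1,…,W_n, where all X_k and Y_k are nonempty compact metric spaces of diameter at most r. Let R be a correspondence between Z and W with distortion dis(R) < 2r. Then there exists a permutation σ of {1,…,n} such that R[Z_k] ⊆ W_{σ(k)} and R⁻¹[W_k] ⊆ Z_{σ⁻¹(k)} for every k ∈ {1,…,n}. -/
import Mathlib


open GromovHausdorff

universe u v w

/-- `Z` (with two distinguished points `p true = p¹` and `p false = p⁻¹`, and pieces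
`P 0, …, P (n-1)`, where `P k` plays the role of `Z_{k+1}`) is an `(r,n)`-stacked space
over the nonempty compact metric spaces `X 0, …, X (n-1)` (each of diameter at most `r`):
* `dist p¹ p⁻¹ = 3r`;
* the pieces are pairwise disjoint and do not contain `p¹`, `p⁻¹`;
* `{p¹, p⁻¹}` together with the pieces cover `Z`;
* the piece `P k` with the induced metric is isometric to `X k`;
* `dist (p^s) z = 5r(k+1)` for every `z ∈ P k` and both `s`;
* `dist z w = 5r|k - l|` for `z ∈ P k`, `w ∈ P l` with `k ≠ l`. -/
def IsStackedSpace (r : ℝ) {n : ℕ} (X : Fin n → Type u) [∀ k, MetricSpace (X k)]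
    (Z : Type v) [MetricSpace Z] (p : Bool → Z) (P : Fin n → Set Z) : Prop :=
  dist (p true) (p false) = 3 * r ∧
  (Pairwise fun k l : Fin n => Disjoint (P k) (P l)) ∧
  (∀ (k : Fin n) (s : Bool), p s ∉ P k) ∧
  ({p true, p false} ∪ ⋃ k, P k) = Set.univ ∧
  (∀ k : Fin n, Nonempty (X k ≃ᵢ (P k : Set Z))) ∧
  (∀ (k : Fin n) (s : Bool), ∀ z ∈ P k, dist (p s) z = 5 * r * ((k : ℕ) + 1)) ∧
  (∀ k l : Fin n, k ≠ l → ∀ z ∈ P k, ∀ w ∈ P l,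
    dist z w = 5 * r * |((k : ℕ) : ℝ) - ((l : ℕ) : ℝ)|)

/-- `R ⊆ Z × W` is a correspondence: both projections are surjective onto `Z` and `W`. -/
def IsCorrespondence {Z : Type v} {W : Type w} (R : Set (Z × W)) : Prop :=
  (∀ z : Z, ∃ w : W, (z, w) ∈ R) ∧ (∀ w : W, ∃ z : Z, (z, w) ∈ R)

/-- The distortion of a relation `R ⊆ Z × W`:
`dis R = sup {|d_Z(x, ξ) - d_W(y, η)| : (x, y), (ξ, η) ∈ R}`. -/
noncomputable def distortion {Z : Type v} {W : Type w} [MetricSpace Z] [MetricSpace W]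
    (R : Set (Z × W)) : ℝ :=
  sSup {t : ℝ | ∃ a ∈ R, ∃ b ∈ R, t = |dist a.1 b.1 - dist a.2 b.2|}

universe u₁ u₂ v₁ v₂

lemma one_le_abs_natCast_sub {a b : ℕ} (h : a ≠ b) : (1:ℝ) ≤ |(a:ℝ) - (b:ℝ)| := by
  have h' : (a:ℤ) ≠ (b:ℤ) := by exact_mod_cast h
  have h2 : (1:ℤ) ≤ |(a:ℤ) - (b:ℤ)| := Int.one_le_abs (sub_ne_zero.mpr h')
  have h3 : ((a:ℝ) - (b:ℝ)) = (((a:ℤ) - (b:ℤ) : ℤ) : ℝ) := by push_cast; ring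
  rw [h3, ← Int.cast_abs]
  exact_mod_cast h2

lemma piece_diam {r : ℝ} {X : Type u₁} [MetricSpace X] [CompactSpace X]
    {Z : Type v₁} [MetricSpace Z] {A : Set Z} (hiso : Nonempty (X ≃ᵢ A))
    (hd : Metric.diam (Set.univ : Set X) ≤ r)
    {z w : Z} (hz : z ∈ A) (hw : w ∈ A) : dist z w ≤ r := by
  obtain ⟨e⟩ := hiso
  have h := Metric.dist_le_diam_of_mem isCompact_univ.isBounded
    (Set.mem_univ (e.symm ⟨z, hz⟩)) (Set.mem_univ (e.symm ⟨w, hw⟩))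
  rw [e.symm.dist_eq, Subtype.dist_eq] at h
  exact h.trans hd

lemma stacked_key {r : ℝ} (hr : 0 < r) {n : ℕ}
    {X : Fin n → Type u₁} [∀ k, MetricSpace (X k)]
    {Y : Fin n → Type u₂} [∀ k, MetricSpace (Y k)] [∀ k, CompactSpace (Y k)]
    (hdY : ∀ k, Metric.diam (Set.univ : Set (Y k)) ≤ r)
    {Z : Type v₁} [MetricSpace Z] {W : Type v₂} [MetricSpace W]
    {p : Bool → Z} {P : Fin n → Set Z} (hZ : IsStackedSpace r X Z p P)
    {q : Bool → W} {Q : Fin n → Set W} (hW : IsStackedSpace r Y W q Q)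
    (S : Set (Z × W)) (hsurj : ∀ z : Z, ∃ w, (z, w) ∈ S)
    (hb : ∀ a ∈ S, ∀ b ∈ S, |dist a.1 b.1 - dist a.2 b.2| < 2 * r) :
    ∀ k : Fin n, ∀ z ∈ P k, ∀ w : W, (z, w) ∈ S → w ∈ Q k := by
  obtain ⟨hZ1, hZ2, hZ3, hZ4, hZ5, hZ6, hZ7⟩ := hZ
  obtain ⟨hW1, hW2, hW3, hW4, hW5, hW6, hW7⟩ := hW
  have cover : ∀ w : W, (∃ t, w = q t) ∨ ∃ l, w ∈ Q l := by
    intro w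
    have hw : w ∈ ({q true, q false} ∪ ⋃ k, Q k) := hW4.symm ▸ Set.mem_univ w
    simp only [Set.mem_union, Set.mem_insert_iff, Set.mem_singleton_iff,
      Set.mem_iUnion] at hw
    rcases hw with (h | h) | ⟨l, hl⟩
    · exact Or.inl ⟨true, h⟩
    · exact Or.inl ⟨false, h⟩
    · exact Or.inr ⟨l, hl⟩
  have hA : ∀ (s : Bool) (w : W), (p s, w) ∈ S → ∃ t, w = q t := by
    intro s w hwS
    obtain ⟨w', hw'⟩ := hsurj (p (!s))
    have hd : dist (p s) (p (!s)) = 3 * r := by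
      cases s
      · simpa [dist_comm] using hZ1
      · simpa using hZ1
    have hbd : |dist (p s) (p (!s)) - dist w w'| < 2 * r := hb _ hwS _ hw'
    rw [hd, abs_lt] at hbd
    rcases cover w with ⟨t, ht⟩ | ⟨l, hl⟩
    · exact ⟨t, ht⟩
    exfalso
    rcases cover w' with ⟨t, ht⟩ | ⟨m, hm⟩
    · subst ht
      have h5 : dist w (q t) = 5 * r * ((l : ℕ) + 1) := by
        rw [dist_comm]; exact hW6 l t w hl
      have hl0 : (0:ℝ) ≤ ((l : ℕ) : ℝ) := Nat.cast_nonneg _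
      nlinarith [hbd.1]
    · by_cases hlm : l = m
      · subst hlm
        have hle : dist w w' ≤ r := piece_diam (hW5 l) (hdY l) hl hm
        linarith [hbd.2]
      · have habs : (1:ℝ) ≤ |((l : ℕ) : ℝ) - ((m : ℕ) : ℝ)| :=
          one_le_abs_natCast_sub (Fin.val_injective.ne hlm)
        have h5 : dist w w' = 5 * r * |((l : ℕ) : ℝ) - ((m : ℕ) : ℝ)| :=
          hW7 l m hlm w hl w' hm
        nlinarith [hbd.1, habs]
  intro k z hz w hS
  obtain ⟨w0, hw0⟩ := hsurj (p true)
  obtain ⟨t, rfl⟩ := hA true w0 hw0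
  have hbd : |dist (p true) z - dist (q t) w| < 2 * r := hb _ hw0 _ hS
  rw [hZ6 k true z hz, abs_lt] at hbd
  have hk0 : (0:ℝ) ≤ ((k : ℕ) : ℝ) := Nat.cast_nonneg _
  rcases cover w with ⟨t', rfl⟩ | ⟨l, hl⟩
  · exfalso
    have hqd : dist (q t) (q t') ≤ 3 * r := by
      have h0 : (0:ℝ) ≤ 3 * r := by positivity
      cases t <;> cases t'
      · simpa using h0
      · rw [dist_comm, hW1]
      · rw [hW1]
      · simpa using h0
    nlinarith [hbd.2]
  · suffices hkl : k = l by rwa [hkl]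
    by_contra hkl
    have habs : (1:ℝ) ≤ |((k : ℕ) : ℝ) - ((l : ℕ) : ℝ)| :=
      one_le_abs_natCast_sub (Fin.val_injective.ne hkl)
    have h5 : dist (q t) w = 5 * r * ((l : ℕ) + 1) := hW6 l t w hl
    rw [h5] at hbd
    rcases le_abs.mp habs with h | h
    · nlinarith [hbd.2]
    · nlinarith [hbd.1]

/-- Let `Z`, `W` be compact `(r,n)`-stacked spaces over the `X k` and
`Y k`, with pieces `P k` and `Q k` respectively, and let `R` be a correspondence between
`Z` and `W` with `dis R < 2r`. Then there is a permutation `σ` of `{1,…,n}` (here of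
`Fin n`) with `R[P k] ⊆ Q (σ k)` and `R⁻¹[Q k] ⊆ P (σ⁻¹ k)` for every `k`. -/
theorem stackedSpace_corr_pieces_perm (r : ℝ) (hr : 0 < r) (n : ℕ) (hn : 1 ≤ n)
    (X Y : Fin n → Type u)
    [∀ k, MetricSpace (X k)] [∀ k, CompactSpace (X k)] [∀ k, Nonempty (X k)]
    [∀ k, MetricSpace (Y k)] [∀ k, CompactSpace (Y k)] [∀ k, Nonempty (Y k)]
    (hdX : ∀ k, Metric.diam (Set.univ : Set (X k)) ≤ r)
    (hdY : ∀ k, Metric.diam (Set.univ : Set (Y k)) ≤ r)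
    (Z : Type v) [MetricSpace Z] [CompactSpace Z]
    (W : Type w) [MetricSpace W] [CompactSpace W]
    (p : Bool → Z) (P : Fin n → Set Z) (hZ : IsStackedSpace r X Z p P)
    (q : Bool → W) (Q : Fin n → Set W) (hW : IsStackedSpace r Y W q Q)
    (R : Set (Z × W)) (hR : IsCorrespondence R) (hdis : distortion R < 2 * r) :
    ∃ σ : Equiv.Perm (Fin n), ∀ k : Fin n,
      {w : W | ∃ z ∈ P k, (z, w) ∈ R} ⊆ Q (σ k) ∧
      {z : Z | ∃ w ∈ Q k, (z, w) ∈ R} ⊆ P (σ⁻¹ k) := by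
  have hb : ∀ a ∈ R, ∀ b ∈ R, |dist a.1 b.1 - dist a.2 b.2| < 2 * r := by
    intro a ha b hbm
    have hmem : |dist a.1 b.1 - dist a.2 b.2| ∈
        {t : ℝ | ∃ a ∈ R, ∃ b ∈ R, t = |dist a.1 b.1 - dist a.2 b.2|} :=
      ⟨a, ha, b, hbm, rfl⟩
    refine lt_of_le_of_lt (le_csSup ?_ hmem) hdis
    refine ⟨Metric.diam (Set.univ : Set Z) + Metric.diam (Set.univ : Set W), ?_⟩
    rintro t ⟨x, hx, y, hy, rfl⟩
    have h1 : dist x.1 y.1 ≤ Metric.diam (Set.univ : Set Z) :=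
      Metric.dist_le_diam_of_mem isCompact_univ.isBounded trivial trivial
    have h2 : dist x.2 y.2 ≤ Metric.diam (Set.univ : Set W) :=
      Metric.dist_le_diam_of_mem isCompact_univ.isBounded trivial trivial
    have h3 := dist_nonneg (x := x.1) (y := y.1)
    have h4 := dist_nonneg (x := x.2) (y := y.2)
    rw [abs_le]
    constructor <;> linarith
  have fwd := stacked_key hr hdY hZ hW R hR.1 hb
  set S : Set (W × Z) := {a : W × Z | (a.2, a.1) ∈ R} with hSdef
  have hsurj' : ∀ w : W, ∃ z : Z, (w, z) ∈ S := hR.2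
  have hb' : ∀ a ∈ S, ∀ b ∈ S, |dist a.1 b.1 - dist a.2 b.2| < 2 * r := by
    intro a ha b hbm
    rw [abs_sub_comm]
    exact hb _ ha _ hbm
  have bwd := stacked_key hr hdX hW hZ S hsurj' hb'
  refine ⟨1, fun k => ⟨?_, ?_⟩⟩
  · rintro w ⟨z, hz, hzw⟩
    simpa using fwd k z hz w hzw
  · rintro z ⟨w, hw, hzw⟩
    simpa using bwd k w hw z hzw
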